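/- arXiv:0704.0957 — 2 statements merged into one kernel-verified Lean document; each statement's English description precedes it below -/
import Mathlib

section
/- If Y is a Gamma(r, λ)-distributed random variable with r ≥ 1 and λ > 0, then for any t > 0, E[exp(-Y²/(2t))] ≤ e^{tλ²/2} (2λ²t)^{r/2} Γ(r/2)/(2Γ(r)). -/
open Real MeasureTheory ProbabilityTheory
open scoped NNReal ENNReal

theorem stmt_0 (r lam t : ℝ) (hr : 1 ≤ r) (hlam : 0 < lam) (ht : 0 < t) :
    ∫ y, exp (-y ^ 2 / (2 * t)) ∂(gammaMeasure r lam) ≤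
      exp (t * lam ^ 2 / 2) * (2 * lam ^ 2 * t) ^ (r / 2) * Gamma (r / 2) / (2 * Gamma r) := by
  have hr0 : (0:ℝ) < r := lt_of_lt_of_le one_pos hr
  have hΓ : 0 < Gamma r := Real.Gamma_pos_of_pos hr0
  have hb : (0:ℝ) < 1 / (2 * t) := by positivity
  set C : ℝ := exp (t * lam ^ 2 / 2) * (lam ^ r / Gamma r) with hC
  have hCpos : 0 < C := by positivity
  -- rewrite the integral against the density
  have h1 : ∫ y, exp (-y ^ 2 / (2 * t)) ∂(gammaMeasure r lam)
      = ∫ y, gammaPDFReal r lam y * exp (-y ^ 2 / (2 * t)) := by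
    rw [gammaMeasure]
    have : (gammaPDF r lam) = fun x => ((Real.toNNReal (gammaPDFReal r lam x) : ℝ≥0) : ℝ≥0∞) := by
      funext x; rfl
    rw [this, integral_withDensity_eq_integral_smul
      ((measurable_gammaPDFReal r lam).real_toNNReal) _]
    refine integral_congr_ae (ae_of_all _ fun x => ?_)
    simp [NNReal.smul_def, Real.coe_toNNReal _ (gammaPDFReal_nonneg hr0 hlam x)]
  rw [h1]
  -- the integrand vanishes off Ici 0
  have h2 : ∫ y, gammaPDFReal r lam y * exp (-y ^ 2 / (2 * t))
      = ∫ y in Set.Ioi (0:ℝ), gammaPDFReal r lam y * exp (-y ^ 2 / (2 * t)) := by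
    rw [← integral_Ici_eq_integral_Ioi]
    refine (setIntegral_eq_integral_of_forall_compl_eq_zero fun x hx => ?_).symm
    have hx' : x < 0 := by simpa using hx
    simp [gammaPDFReal, not_le.mpr hx']
  rw [h2]
  -- the dominating integrable function
  have hint : IntegrableOn (fun x : ℝ => C * (x ^ (r - 1) * exp (-(1/(2*t)) * x ^ 2)))
      (Set.Ioi 0) := by
    exact (integrableOn_rpow_mul_exp_neg_mul_sq hb (by linarith : (-1:ℝ) < r - 1)).const_mul C
  have hmono : ∫ y in Set.Ioi (0:ℝ), gammaPDFReal r lam y * exp (-y ^ 2 / (2 * t))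
      ≤ ∫ y in Set.Ioi (0:ℝ), C * (y ^ (r - 1) * exp (-(1/(2*t)) * y ^ 2)) := by
    refine integral_mono_of_nonneg ?_ hint ?_
    · exact ae_of_all _ fun x => mul_nonneg (gammaPDFReal_nonneg hr0 hlam x) (exp_nonneg _)
    · refine (ae_restrict_iff' measurableSet_Ioi).mpr (ae_of_all _ fun x hx => ?_)
      have hx0 : (0:ℝ) ≤ x := le_of_lt hx
      have hexp : exp (-x ^ 2 / (2 * t)) = exp (-(1/(2*t)) * x ^ 2) := by
        congr 1; field_simp
      simp only [gammaPDFReal, if_pos hx0]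
      rw [hexp]
      have h3 : exp (-(lam * x)) ≤ exp (t * lam ^ 2 / 2) := by
        apply exp_le_exp.2
        nlinarith [mul_nonneg hlam.le hx0]
      calc lam ^ r / Gamma r * x ^ (r - 1) * exp (-(lam * x)) * exp (-(1/(2*t)) * x ^ 2)
          ≤ lam ^ r / Gamma r * x ^ (r - 1) * exp (t * lam ^ 2 / 2) * exp (-(1/(2*t)) * x ^ 2) := by
            gcongr
        _ = C * (x ^ (r - 1) * exp (-(1/(2*t)) * x ^ 2)) := by rw [hC]; ring
  refine hmono.trans_eq ?_
  -- evaluate the Gamma-type integral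
  have hrw : ∀ x ∈ Set.Ioi (0:ℝ), C * (x ^ (r - 1) * exp (-(1/(2*t)) * x ^ 2))
      = C * (x ^ (r - 1) * exp (-(1/(2*t)) * x ^ ((2:ℕ):ℝ))) := by
    intro x hx
    rw [rpow_natCast]
  rw [setIntegral_congr_fun measurableSet_Ioi hrw, integral_const_mul,
    integral_rpow_mul_exp_neg_mul_rpow (by norm_num : (0:ℝ) < ((2:ℕ):ℝ))
      (by linarith : (-1:ℝ) < r - 1) hb]
  have hsimp : r - 1 + 1 = r := by ring
  rw [hsimp]
  have hpow : (1 / (2 * t)) ^ (-r / ((2:ℕ):ℝ)) = (2 * t) ^ (r / 2) := by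
    rw [one_div, Real.inv_rpow (by positivity), ← Real.rpow_neg (by positivity)]
    congr 1
    push_cast
    ring
  rw [hpow, hC]
  have hlam2 : lam ^ r = (lam ^ 2) ^ (r / 2) := by
    rw [← rpow_natCast lam 2, ← rpow_mul hlam.le]
    push_cast
    rw [show (2:ℝ) * (r / 2) = r by ring]
  have hmul : (2 * lam ^ 2 * t) ^ (r / 2) = (lam ^ 2) ^ (r / 2) * (2 * t) ^ (r / 2) := by
    rw [← mul_rpow (by positivity) (by positivity)]
    ring_nf
  rw [hmul, hlam2]
  push_cast
  ring
end

section
/- For integers 1 ≤ J < N with 2J/N ≤ (log 2)/2, the ratio ∏_{i=1}^{J}(1 - i/N)² / ∏_{i=1}^{J}(1 - 2i/N) satisfies e^{-J(J+1)/N} ≤ ratio ≤ e^{J(J+1)/N}. -/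
open Real Finset

lemma aux_gauss : ∀ J : ℕ, (∑ i ∈ Icc 1 J, i) * 2 = J * (J+1) := by
  intro J
  induction J with
  | zero => simp
  | succ n ih =>
    rw [Finset.sum_Icc_succ_top (by omega), add_mul, ih]
    ring

theorem stmt_5 (J N : ℕ) (hJ : 1 ≤ J) (hJN : J < N)
    (h : 2 * (J : ℝ) / N ≤ Real.log 2 / 2) :
    exp (-(J * (J + 1) / N : ℝ)) ≤
      (∏ i ∈ Icc 1 J, (1 - (i : ℝ) / N) ^ 2) / (∏ i ∈ Icc 1 J, (1 - 2 * (i : ℝ) / N)) ∧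
    (∏ i ∈ Icc 1 J, (1 - (i : ℝ) / N) ^ 2) / (∏ i ∈ Icc 1 J, (1 - 2 * (i : ℝ) / N)) ≤
      exp ((J * (J + 1) / N : ℝ)) := by
  have hN : (0:ℝ) < N := by
    have : 0 < N := lt_of_le_of_lt (Nat.zero_le J) hJN
    exact_mod_cast this
  have hlog : Real.log 2 / 2 < 1/2 := by
    have := Real.log_two_lt_d9
    linarith
  have key : ∀ i ∈ Icc 1 J, 0 < 1 - 2*(i:ℝ)/N ∧ 1 - 2*(i:ℝ)/N ≤ (1 - (i:ℝ)/N)^2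
      ∧ (1 - (i:ℝ)/N)^2 ≤ Real.exp (-(2*(i:ℝ)/N))
      ∧ Real.exp (-(4*(i:ℝ)/N)) ≤ 1 - 2*(i:ℝ)/N := by
    intro i hi
    simp only [mem_Icc] at hi
    have hiJ : (i:ℝ) ≤ J := by exact_mod_cast hi.2
    have hi0 : (0:ℝ) ≤ i := Nat.cast_nonneg i
    have hxle : 2*(i:ℝ)/N ≤ Real.log 2 / 2 := by
      refine le_trans ?_ h
      gcongr
    have hxhalf : 2*(i:ℝ)/N < 1/2 := lt_of_le_of_lt hxle hlog
    have hx0 : 0 ≤ (i:ℝ)/N := by positivity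
    have hx2 : (i:ℝ)/N < 1/4 := by
      rw [div_lt_iff₀ hN] at hxhalf ⊢
      linarith
    set x : ℝ := (i:ℝ)/N with hx
    have h2x : 2*(i:ℝ)/N = 2*x := by rw [hx]; ring
    have h4x : 4*(i:ℝ)/N = 4*x := by rw [hx]; ring
    rw [h2x, h4x]
    have h1 : 0 < 1 - 2*x := by linarith
    refine ⟨h1, by nlinarith [sq_nonneg x], ?_, ?_⟩
    · have e1 : 1 - x ≤ Real.exp (-x) := by
        have := Real.add_one_le_exp (-x); linarith
      have h1x : (0:ℝ) ≤ 1 - x := by linarith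
      calc (1-x)^2 ≤ (Real.exp (-x))^2 := by gcongr
        _ = Real.exp (-(2*x)) := by
            rw [sq, ← Real.exp_add]; ring_nf
    · have he : 1 + 4*x ≤ Real.exp (4*x) := by
        have := Real.add_one_le_exp (4*x); linarith
      have hmul : Real.exp (-(4*x)) * Real.exp (4*x) = 1 := by
        rw [← Real.exp_add]; simp
      have hE : 0 < Real.exp (-(4*x)) := Real.exp_pos _
      nlinarith [hE, hmul, he, mul_le_mul_of_nonneg_left he hE.le]
  have hBpos : 0 < ∏ i ∈ Icc 1 J, (1 - 2*(i:ℝ)/N) :=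
    Finset.prod_pos fun i hi => (key i hi).1
  have hAB : (∏ i ∈ Icc 1 J, (1 - 2*(i:ℝ)/N)) ≤ ∏ i ∈ Icc 1 J, (1 - (i:ℝ)/N)^2 :=
    Finset.prod_le_prod (fun i hi => (key i hi).1.le) (fun i hi => (key i hi).2.1)
  have hA_le : (∏ i ∈ Icc 1 J, (1 - (i:ℝ)/N)^2) ≤ ∏ i ∈ Icc 1 J, Real.exp (-(2*(i:ℝ)/N)) :=
    Finset.prod_le_prod (fun i _ => sq_nonneg _) (fun i hi => (key i hi).2.2.1)
  have hB_ge : (∏ i ∈ Icc 1 J, Real.exp (-(4*(i:ℝ)/N))) ≤ ∏ i ∈ Icc 1 J, (1 - 2*(i:ℝ)/N) :=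
    Finset.prod_le_prod (fun i _ => (Real.exp_pos _).le) (fun i hi => (key i hi).2.2.2)
  have hsum : ∑ i ∈ Icc 1 J, (i:ℝ) = J*(J+1)/2 := by
    have hnat : (∑ i ∈ Icc 1 J, i) * 2 = J * (J+1) := aux_gauss J
    have : ((∑ i ∈ Icc 1 J, i : ℕ) : ℝ) * 2 = (J:ℝ) * (J+1) := by exact_mod_cast hnat
    rw [Nat.cast_sum] at this
    linarith
  have hS : 0 ≤ (J:ℝ) * (J + 1) / N := by positivity
  constructor
  · calc Real.exp (-((J:ℝ) * (J + 1) / N)) ≤ 1 := by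
          rw [Real.exp_le_one_iff]; linarith
      _ ≤ _ := by rw [le_div_iff₀ hBpos]; linarith
  · have sumc : ∀ c : ℝ, ∑ i ∈ Icc 1 J, -(c*(i:ℝ)/N) = -(c * ((J:ℝ)*(J+1)/2) / N) := by
      intro c
      have h1 : ∑ i ∈ Icc 1 J, (c*(i:ℝ)/N) = c * ((J:ℝ)*(J+1)/2) / N := by
        rw [← Finset.sum_div, ← Finset.mul_sum, hsum]
      rw [← h1, ← Finset.sum_neg_distrib]
    have e2 : (∏ i ∈ Icc 1 J, Real.exp (-(2*(i:ℝ)/N))) = Real.exp (-((J:ℝ)*(J+1)/N)) := by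
      rw [← Real.exp_sum, sumc 2]
      congr 1; ring
    have e4 : (∏ i ∈ Icc 1 J, Real.exp (-(4*(i:ℝ)/N))) = Real.exp (-(2*((J:ℝ)*(J+1)/N))) := by
      rw [← Real.exp_sum, sumc 4]
      congr 1; ring
    calc (∏ i ∈ Icc 1 J, (1 - (i:ℝ)/N)^2) / (∏ i ∈ Icc 1 J, (1 - 2*(i:ℝ)/N))
        ≤ Real.exp (-((J:ℝ)*(J+1)/N)) / Real.exp (-(2*((J:ℝ)*(J+1)/N))) := by
          rw [← e2, ← e4]
          exact div_le_div₀ (Finset.prod_nonneg fun i _ => (Real.exp_pos _).le) hA_le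
            (Finset.prod_pos fun i _ => Real.exp_pos _) hB_ge
      _ = Real.exp ((J:ℝ)*(J+1)/N) := by rw [← Real.exp_sub]; ring_nf
end
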